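/- Let x, y, z be integers with 0 < x < y < z and gcd(x, y, z) = 1 satisfying 2yz = 3(y − x)(z − x), 2xz = 3(y − x)(z − y), and xy = (z − x)(z − y). Then (x, y, z) = (1, 5, 6). Equivalently, the only nondegenerate codimension-3 degree sequence D with B(D) = (2, 3, 3, 2) is D = (0, 1, 5, 6). -/

import Mathlib

/-- The only integers `0 < x < y < z` with `gcd(x, y, z) = 1` satisfying
`2yz = 3(y − x)(z − x)`, `2xz = 3(y − x)(z − y)`, and `xy = (z − x)(z − y)` are
`(x, y, z) = (1, 5, 6)`; i.e., the only nondegenerate codimension-3 degree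
sequence `D` with `B(D) = (2, 3, 3, 2)` is `D = (0, 1, 5, 6)`. -/
theorem degree_sequence_B_2332
    (x y z : ℤ) (hx : 0 < x) (hxy : x < y) (hyz : y < z)
    (hgcd : Int.gcd x (Int.gcd y z) = 1)
    (h1 : 2 * (y * z) = 3 * (y - x) * (z - x))
    (h2 : 2 * (x * z) = 3 * (y - x) * (z - y))
    (h3 : x * y = (z - x) * (z - y)) :
    x = 1 ∧ y = 5 ∧ z = 6 := by
  have h4 : (y - x) * (2 * z - 3 * (y - x)) = 0 := by linear_combination h1 - h2
  have key : 2 * z = 3 * (y - x) := by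
    rcases mul_eq_zero.mp h4 with h | h <;> omega
  have h5 : 3 * ((y - x) * (y - 5 * x)) = 0 := by
    linear_combination (-2 * z - y + 5 * x) * key - 4 * h3
  have h6 : (y - x) * (y - 5 * x) = 0 := by linarith
  have hy : y = 5 * x := by
    rcases mul_eq_zero.mp h6 with h | h <;> omega
  have hz : z = 6 * x := by omega
  have hxd : x ∣ Int.gcd x (Int.gcd y z) := by
    exact Int.dvd_coe_gcd dvd_rfl (Int.dvd_coe_gcd ⟨5, by omega⟩ ⟨6, by omega⟩)
  rw [hgcd] at hxd
  have : x = 1 := by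
    have := Int.le_of_dvd one_pos hxd
    omega
  omega
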